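/- Let w_1,…,w_m ∈ R^d be nonzero vectors with pairwise nonnegative inner products and pairwise cosine similarities at most ξ ∈ [0,1]. Define φ(v) = Σ_{j=1}^m cos²(v, w_j) for nonzero v. Then sup over nonzero v of φ(v) is at most 1 + (m−1)ξ. -/

import Mathlib

open Finset

theorem stmt10 {d m : ℕ} (w : Fin m → Fin d → ℝ) (ξ : ℝ)
    (hξ0 : 0 ≤ ξ) (hξ1 : ξ ≤ 1)
    (hnz : ∀ j, w j ≠ 0)
    (hpos : ∀ j k, j ≠ k → 0 ≤ ∑ l, w j l * w k l)
    (hcos : ∀ j k, j ≠ k →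
      ∑ l, w j l * w k l ≤
        ξ * Real.sqrt (∑ l, (w j l) ^ 2) * Real.sqrt (∑ l, (w k l) ^ 2)) :
    ∀ v : Fin d → ℝ, v ≠ 0 →
      ∑ j, (∑ l, v l * w j l) ^ 2 / ((∑ l, (v l) ^ 2) * (∑ l, (w j l) ^ 2))
        ≤ 1 + ((m : ℝ) - 1) * ξ := by
  intro v hv
  -- positivity of the squared norms
  have sqsum_pos : ∀ (u : Fin d → ℝ), u ≠ 0 → 0 < ∑ l, (u l) ^ 2 := by
    intro u hu
    obtain ⟨l, hl⟩ : ∃ l, u l ≠ 0 := by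
      by_contra h; push_neg at h; exact hu (funext h)
    exact Finset.sum_pos' (fun i _ => sq_nonneg _)
      ⟨l, Finset.mem_univ l, by positivity⟩
  have hnv : 0 < ∑ l, (v l) ^ 2 := sqsum_pos v hv
  have hnw : ∀ j, 0 < ∑ l, (w j l) ^ 2 := fun j => sqsum_pos (w j) (hnz j)
  set nv : ℝ := ∑ l, (v l) ^ 2 with hnvdef
  set nw : Fin m → ℝ := fun j => ∑ l, (w j l) ^ 2 with hnwdef
  have hsv : 0 < Real.sqrt nv := Real.sqrt_pos.mpr hnv
  have hsw : ∀ j, 0 < Real.sqrt (nw j) := fun j => Real.sqrt_pos.mpr (hnw j)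
  set c : Fin m → ℝ := fun j =>
    (∑ l, v l * w j l) / (Real.sqrt nv * Real.sqrt (nw j)) with hcdef
  have ha : ∀ j, ∑ l, v l * w j l = c j * (Real.sqrt nv * Real.sqrt (nw j)) := by
    intro j
    rw [hcdef]
    exact (div_mul_cancel₀ _ (mul_pos hsv (hsw j)).ne').symm
  set S : ℝ := ∑ j, (c j) ^ 2 with hSdef
  -- the goal sum equals S
  have hgoal_eq : ∑ j, (∑ l, v l * w j l) ^ 2 / (nv * nw j) = S := by
    refine Finset.sum_congr rfl fun j _ => ?_
    rw [ha j, mul_pow, mul_pow,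
      Real.sq_sqrt hnv.le, Real.sq_sqrt (hnw j).le,
      mul_div_assoc, div_self (mul_pos hnv (hnw j)).ne', mul_one]
  rw [hgoal_eq]
  -- the auxiliary vector z
  set z : Fin d → ℝ := fun l => ∑ j, c j * w j l / Real.sqrt (nw j) with hzdef
  -- inner product of v and z
  have hvz : ∑ l, v l * z l = S * Real.sqrt nv := by
    rw [hzdef]
    simp only [Finset.mul_sum]
    rw [Finset.sum_comm, hSdef, Finset.sum_mul]
    refine Finset.sum_congr rfl fun j _ => ?_
    have h1 : ∑ l, v l * (c j * w j l / Real.sqrt (nw j))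
        = (c j / Real.sqrt (nw j)) * ∑ l, v l * w j l := by
      rw [Finset.mul_sum]; exact Finset.sum_congr rfl fun l _ => by ring
    rw [h1, ha j]
    have h2 : c j / Real.sqrt (nw j) * (c j * (Real.sqrt nv * Real.sqrt (nw j)))
        = c j ^ 2 * Real.sqrt nv * (Real.sqrt (nw j) / Real.sqrt (nw j)) := by ring
    rw [h2, div_self (hsw j).ne', mul_one]
  -- norm squared of z, expanded
  have hzz : ∑ l, (z l) ^ 2
      = ∑ j, ∑ k, c j * c k * (∑ l, w j l * w k l)
          / (Real.sqrt (nw j) * Real.sqrt (nw k)) := by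
    simp only [hzdef, sq, Finset.sum_mul_sum]
    rw [Finset.sum_comm]
    refine Finset.sum_congr rfl fun j _ => ?_
    rw [Finset.sum_comm]
    refine Finset.sum_congr rfl fun k _ => ?_
    rw [Finset.mul_sum, Finset.sum_div]
    refine Finset.sum_congr rfl fun l _ => ?_
    ring
  -- bound each Gram term
  set T : ℝ := ∑ j, |c j| with hTdef
  have hterm : ∀ j k, c j * c k * (∑ l, w j l * w k l)
      / (Real.sqrt (nw j) * Real.sqrt (nw k))
      ≤ if j = k then (c j) ^ 2 else ξ * |c j| * |c k| := by
    intro j k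
    by_cases hjk : j = k
    · subst hjk
      rw [if_pos rfl]
      have hww : ∑ l, w j l * w j l = nw j :=
        Finset.sum_congr rfl fun l _ => (sq (w j l)).symm
      have hnwj : (0:ℝ) ≤ nw j := (hnw j).le
      have hnwj' : (nw j : ℝ) ≠ 0 := ne_of_gt (hnw j)
      rw [hww, Real.mul_self_sqrt hnwj, mul_div_assoc, div_self hnwj', mul_one, sq]
    · simp only [if_neg hjk]
      have h0 := hpos j k hjk
      have h1 := hcos j k hjk
      set t : ℝ := (∑ l, w j l * w k l) / (Real.sqrt (nw j) * Real.sqrt (nw k)) with htdef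
      have ht0 : 0 ≤ t := div_nonneg h0 (mul_pos (hsw j) (hsw k)).le
      have ht1 : t ≤ ξ := by
        rw [htdef, div_le_iff₀ (mul_pos (hsw j) (hsw k))]
        calc ∑ l, w j l * w k l ≤ ξ * Real.sqrt (nw j) * Real.sqrt (nw k) := h1
        _ = ξ * (Real.sqrt (nw j) * Real.sqrt (nw k)) := by ring
      have heq : c j * c k * (∑ l, w j l * w k l)
          / (Real.sqrt (nw j) * Real.sqrt (nw k)) = c j * c k * t := by
        rw [htdef]; ring
      rw [heq]
      calc c j * c k * t ≤ |c j * c k| * t :=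
            mul_le_mul_of_nonneg_right (le_abs_self _) ht0
        _ ≤ |c j * c k| * ξ := mul_le_mul_of_nonneg_left ht1 (abs_nonneg _)
        _ = ξ * |c j| * |c k| := by rw [abs_mul]; ring
  -- so ‖z‖² ≤ ξ T² + (1 - ξ) S
  have hrow : ∀ j : Fin m, ∑ k, (if j = k then (c j) ^ 2 else ξ * |c j| * |c k|)
      = ξ * |c j| * T + (c j) ^ 2 - ξ * (c j) ^ 2 := by
    intro j
    have hsplit : ∀ k : Fin m, (if j = k then (c j) ^ 2 else ξ * |c j| * |c k|)
        = ξ * |c j| * |c k| + (if j = k then (c j) ^ 2 - ξ * (c j) ^ 2 else 0) := by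
      intro k
      rcases eq_or_ne j k with h | h
      · subst h
        rw [if_pos rfl, if_pos rfl, mul_assoc, abs_mul_abs_self, ← sq]
        ring
      · rw [if_neg h, if_neg h, add_zero]
    simp only [hsplit]
    rw [Finset.sum_add_distrib, Finset.sum_ite_eq, if_pos (Finset.mem_univ j),
      ← Finset.mul_sum, ← hTdef]
    ring
  have hzz_le : ∑ l, (z l) ^ 2 ≤ ξ * T ^ 2 + (1 - ξ) * S := by
    rw [hzz]
    calc ∑ j, ∑ k, c j * c k * (∑ l, w j l * w k l)
          / (Real.sqrt (nw j) * Real.sqrt (nw k))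
        ≤ ∑ j, ∑ k, (if j = k then (c j) ^ 2 else ξ * |c j| * |c k|) :=
          Finset.sum_le_sum fun j _ => Finset.sum_le_sum fun k _ => hterm j k
      _ = ξ * T ^ 2 + (1 - ξ) * S := by
          simp only [hrow]
          rw [Finset.sum_sub_distrib, Finset.sum_add_distrib]
          have h1 : ∑ j, ξ * |c j| * T = ξ * T ^ 2 := by
            rw [← Finset.sum_mul, ← Finset.mul_sum, ← hTdef]; ring
          have h2 : ∑ j, ξ * (c j) ^ 2 = ξ * S := by
            rw [← Finset.mul_sum, ← hSdef]
          rw [h1, h2, ← hSdef]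
          ring
  -- Cauchy-Schwarz
  have hcs : (S * Real.sqrt nv) ^ 2 ≤ nv * ∑ l, (z l) ^ 2 := by
    rw [← hvz]
    exact Finset.sum_mul_sq_le_sq_mul_sq _ _ _
  have hS2 : S ^ 2 ≤ ∑ l, (z l) ^ 2 := by
    have h : (S * Real.sqrt nv) ^ 2 = S ^ 2 * nv := by
      rw [mul_pow, Real.sq_sqrt hnv.le]
    rw [h] at hcs
    have := le_of_mul_le_mul_right (by linarith [hcs] : S ^ 2 * nv ≤ (∑ l, (z l) ^ 2) * nv) hnv
    exact this
  -- T² ≤ m S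
  have hT2 : T ^ 2 ≤ (m : ℝ) * S := by
    have h := sq_sum_le_card_mul_sum_sq (s := (Finset.univ : Finset (Fin m)))
      (f := fun j => |c j|)
    simpa [sq_abs, ← hTdef, ← hSdef] using h
  have hS0 : 0 ≤ S := Finset.sum_nonneg fun j _ => sq_nonneg _
  have hfinal : S ^ 2 ≤ (1 + ((m : ℝ) - 1) * ξ) * S := by
    calc S ^ 2 ≤ ξ * T ^ 2 + (1 - ξ) * S := le_trans hS2 hzz_le
      _ ≤ ξ * ((m : ℝ) * S) + (1 - ξ) * S := by
          have := mul_le_mul_of_nonneg_left hT2 hξ0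
          linarith
      _ = (1 + ((m : ℝ) - 1) * ξ) * S := by ring
  rcases eq_or_lt_of_le hS0 with h | h
  · rw [← h]
    have hm : (0 : ℝ) ≤ (m : ℝ) := Nat.cast_nonneg m
    nlinarith
  · nlinarith
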